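/- arXiv:2410.11460 — 5 statements merged into one kernel-verified Lean document; each statement's English description precedes it below -/
import Mathlib

section
/- If an isotropic system of vectors is given, i.e., vectors v_1,...,v_k in R^n satisfy ∑_{i=1}^k v_i ⊗ v_i = Id_n, then there exist indices 1 ≤ i_1 < ... < i_n ≤ k such that det[v_{i_1},...,v_{i_n}]^2 ≥ 1/binomial(k,n). -/
open Matrix Equiv Finset

namespace CBAux

variable {n k : ℕ}

/-- Auxiliary summand in the Cauchy–Binet expansion. -/
def F (M : Matrix (Fin n) (Fin k) ℝ) (N : Matrix (Fin k) (Fin n) ℝ) (p : Fin n → Fin k) : ℝ :=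
  ∑ σ : Equiv.Perm (Fin n), ((Equiv.Perm.sign σ : ℤ) : ℝ) * ∏ i, M (σ i) (p i) * N (p i) i

lemma det_mul_eq_sum_F (M : Matrix (Fin n) (Fin k) ℝ) (N : Matrix (Fin k) (Fin n) ℝ) :
    det (M * N) = ∑ p : Fin n → Fin k, F M N p := by
  simp only [F, det_apply', mul_apply, prod_univ_sum, mul_sum, Fintype.piFinset_univ]
  rw [Finset.sum_comm]

lemma F_eq_zero {M : Matrix (Fin n) (Fin k) ℝ} {N : Matrix (Fin k) (Fin n) ℝ}
    {p : Fin n → Fin k} (H : ¬ Function.Injective p) : F M N p = 0 := by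
  obtain ⟨i, j, hpij, hij⟩ : ∃ i j, p i = p j ∧ i ≠ j := by
    rw [Function.Injective] at H
    push_neg at H
    obtain ⟨i, j, h1, h2⟩ := H
    exact ⟨i, j, h1, h2⟩
  exact
    sum_involution (fun σ _ => σ * Equiv.swap i j)
      (fun σ _ => by
        have : (∏ x, M (σ x) (p x)) = ∏ x, M ((σ * Equiv.swap i j) x) (p x) :=
          Fintype.prod_equiv (Equiv.swap i j) _ _ (by simp [Equiv.apply_swap_eq_self hpij])
        simp [this, Equiv.Perm.sign_swap hij, prod_mul_distrib])
      (fun σ _ _ => (not_congr Equiv.mul_swap_eq_iff).mpr hij) (fun _ _ => mem_univ _)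
      fun σ _ => Equiv.mul_swap_involutive i j σ

lemma det_mul_eq_sum_inj (M : Matrix (Fin n) (Fin k) ℝ) (N : Matrix (Fin k) (Fin n) ℝ) :
    det (M * N) = ∑ p : {p : Fin n → Fin k // Function.Injective p}, F M N p.1 := by
  classical
  rw [det_mul_eq_sum_F]
  rw [← Finset.sum_filter_add_sum_filter_not Finset.univ (fun p => Function.Injective p)
    (F M N)]
  rw [Finset.sum_subtype (p := fun p : Fin n → Fin k => Function.Injective p)
    (Finset.univ.filter fun p => Function.Injective p) (by simp) (F M N)]
  have h2 : ∑ p ∈ Finset.univ.filter (fun p => ¬ Function.Injective p), F M N p = 0 := by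
    refine Finset.sum_eq_zero fun p hp => ?_
    exact F_eq_zero (by simpa using hp)
  rw [h2, add_zero]

/-- The packing equivalence: a pair (subset of size n, injective self-map of Fin n)
corresponds to an injective map Fin n → Fin k. -/
noncomputable def packEquiv (n k : ℕ) :
    ({z : Finset (Fin k) // z.card = n} × {q : Fin n → Fin n // Function.Injective q}) ≃
      {p : Fin n → Fin k // Function.Injective p} := by
  apply Equiv.ofBijective
    (fun x => ⟨x.1.1.orderEmbOfFin x.1.2 ∘ x.2.1,
      ((x.1.1.orderEmbOfFin x.1.2).injective).comp x.2.2⟩)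
  constructor
  · rintro ⟨⟨z, hz⟩, ⟨q, hq⟩⟩ ⟨⟨z', hz'⟩, ⟨q', hq'⟩⟩ h
    have h0 : z.orderEmbOfFin hz ∘ q = z'.orderEmbOfFin hz' ∘ q' := congrArg Subtype.val h
    have himg : ∀ (w : Finset (Fin k)) (hw : w.card = n) (r : Fin n → Fin n),
        Function.Injective r → Finset.image (w.orderEmbOfFin hw ∘ r) Finset.univ = w := by
      intro w hw r hr
      have hrsurj : Function.Surjective r := Finite.surjective_of_injective hr
      ext x
      simp only [Finset.mem_image, Finset.mem_univ, true_and, Function.comp_apply]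
      constructor
      · rintro ⟨i, rfl⟩
        have := Finset.range_orderEmbOfFin w hw
        have : (w.orderEmbOfFin hw) (r i) ∈ Set.range (w.orderEmbOfFin hw) := ⟨r i, rfl⟩
        rwa [Finset.range_orderEmbOfFin, Finset.mem_coe] at this
      · intro hx
        have : x ∈ Set.range (w.orderEmbOfFin hw) := by
          rw [Finset.range_orderEmbOfFin]; exact hx
        obtain ⟨i, hi⟩ := this
        obtain ⟨j, rfl⟩ := hrsurj i
        exact ⟨j, hi⟩
    have hzz' : z = z' := by
      rw [← himg z hz q hq, ← himg z' hz' q' hq', h0]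
    subst hzz'
    have hqq' : q = q' := by
      funext i
      have := congrFun h0 i
      exact (z.orderEmbOfFin hz).injective this
    subst hqq'
    rfl
  · rintro ⟨p, hp⟩
    have hz : (Finset.image p Finset.univ).card = n := by
      rw [Finset.card_image_of_injective _ hp, Finset.card_univ, Fintype.card_fin]
    set z := Finset.image p Finset.univ with hzdef
    have hmem : ∀ i, p i ∈ z := fun i => Finset.mem_image_of_mem p (Finset.mem_univ i)
    set q : Fin n → Fin n := fun i => (z.orderIsoOfFin hz).symm ⟨p i, hmem i⟩ with hqdef
    have hkey : ∀ i, (z.orderEmbOfFin hz) (q i) = p i := by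
      intro i
      rw [← Finset.coe_orderIsoOfFin_apply, hqdef]
      simp
    have hq : Function.Injective q := by
      intro i j hij
      apply hp
      rw [← hkey i, ← hkey j, hij]
    refine ⟨⟨⟨z, hz⟩, ⟨q, hq⟩⟩, ?_⟩
    apply Subtype.ext
    funext i
    exact hkey i

end CBAux

open CBAux in
/-- If vectors `v 1, ..., v k` in `ℝ^n` satisfy `∑ i, v i ⊗ v i = Id_n`, then there exist
indices `i_1 < ... < i_n` such that the square of the determinant of the matrix with columns
`v i_1, ..., v i_n` is at least `1 / (k.choose n)`. -/
theorem cauchy_binet_large_subdeterminant (n k : ℕ) (v : Fin k → Fin n → ℝ)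
    (hiso : ∑ i, vecMulVec (v i) (v i) = (1 : Matrix (Fin n) (Fin n) ℝ)) :
    ∃ s : Fin n → Fin k, StrictMono s ∧
      (1 : ℝ) / (k.choose n) ≤ (Matrix.det (Matrix.of fun a b => v (s b) a)) ^ 2 := by
  classical
  set M : Matrix (Fin n) (Fin k) ℝ := Matrix.of (fun a i => v i a) with hM
  have hMN : M * Mᵀ = 1 := by
    rw [← hiso]
    ext a b
    simp [Matrix.mul_apply, vecMulVec, Matrix.sum_apply, hM]
  -- n ≤ k
  have hnk : n ≤ k := by
    have h1 : (1 : Matrix (Fin n) (Fin n) ℝ).rank = n := by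
      rw [Matrix.rank_one, Fintype.card_fin]
    have h2 : (M * Mᵀ).rank ≤ k := le_trans (Matrix.rank_mul_le_left M Mᵀ)
      (le_trans M.rank_le_card_width (le_of_eq (Fintype.card_fin k)))
    rw [hMN, h1] at h2
    exact h2
  -- Cauchy–Binet
  have key : (1 : ℝ) = ∑ z : {z : Finset (Fin k) // z.card = n},
      (Matrix.det (M.submatrix id (z.1.orderEmbOfFin z.2)))^2 := by
    have c1 : (1 : ℝ) = Matrix.det (M * Mᵀ) := by rw [hMN, Matrix.det_one]
    rw [c1, det_mul_eq_sum_inj]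
    rw [← Equiv.sum_comp (packEquiv n k) (fun p => F M Mᵀ p.1)]
    rw [Fintype.sum_prod_type]
    refine Finset.sum_congr rfl fun z _ => ?_
    have hsub : ∀ q : {q : Fin n → Fin n // Function.Injective q},
        F M Mᵀ ((packEquiv n k) (z, q)).1 =
          F (M.submatrix id (z.1.orderEmbOfFin z.2))
            (Mᵀ.submatrix (z.1.orderEmbOfFin z.2) id) q.1 := by
      intro q
      rfl
    rw [Finset.sum_congr rfl (fun q _ => hsub q), ← det_mul_eq_sum_inj]
    rw [show Mᵀ.submatrix (⇑(z.1.orderEmbOfFin z.2)) id =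
      (M.submatrix id (⇑(z.1.orderEmbOfFin z.2)))ᵀ from rfl]
    rw [Matrix.det_mul, Matrix.det_transpose, sq]
  -- pigeonhole
  have hcard : Fintype.card {z : Finset (Fin k) // z.card = n} = k.choose n := by
    rw [Fintype.card_finset_len, Fintype.card_fin]
  have hpos : 0 < k.choose n := Nat.choose_pos hnk
  have hne : Nonempty {z : Finset (Fin k) // z.card = n} := by
    rw [← Fintype.card_pos_iff, hcard]; exact hpos
  obtain ⟨z₀, hz₀⟩ : ∃ z : {z : Finset (Fin k) // z.card = n},
      (1 : ℝ) / (k.choose n) ≤ (Matrix.det (M.submatrix id (z.1.orderEmbOfFin z.2)))^2 := by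
    by_contra hcon
    push_neg at hcon
    have : (∑ z : {z : Finset (Fin k) // z.card = n},
        (Matrix.det (M.submatrix id (z.1.orderEmbOfFin z.2)))^2) <
        ∑ _z : {z : Finset (Fin k) // z.card = n}, (1 : ℝ) / (k.choose n) := by
      apply Finset.sum_lt_sum_of_nonempty
      · exact Finset.univ_nonempty
      · intro z _; exact hcon z
    rw [Finset.sum_const, Finset.card_univ, hcard, nsmul_eq_mul] at this
    rw [← key] at this
    have hc : ((k.choose n : ℝ)) * (1 / (k.choose n : ℝ)) = 1 := by
      field_simp
    rw [hc] at this
    exact lt_irrefl _ this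
  refine ⟨z₀.1.orderEmbOfFin z₀.2, (z₀.1.orderEmbOfFin z₀.2).strictMono, ?_⟩
  have : (Matrix.of fun a b => v ((z₀.1.orderEmbOfFin z₀.2) b) a) =
      M.submatrix id (z₀.1.orderEmbOfFin z₀.2) := rfl
  rw [this]
  exact hz₀
end

section
/- Let R > 0 and let K ⊆ C ⊆ R·B^n_2 be origin-symmetric convex bodies in R^n, n ≥ 2. Then ℓ(K) − ℓ(C) ≥ (n/(2πe))^{n/2} R^{-(n+1)} V(C \ K), where ℓ(K) = ∫_{R^n} ‖x‖_K dγ_n(x) is the Gaussian ℓ-norm, ‖·‖_K is the Minkowski gauge of K, and V denotes Lebesgue volume. -/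
set_option maxHeartbeats 1000000

open MeasureTheory

/-- The standard Gaussian measure on `ℝ^n`. -/
noncomputable def gaussianMeasure (n : ℕ) : Measure (EuclideanSpace ℝ (Fin n)) :=
  volume.withDensity
    (fun x => ENNReal.ofReal ((2 * Real.pi) ^ (-(n : ℝ) / 2) * Real.exp (-‖x‖ ^ 2 / 2)))

/-- The Gaussian ℓ-norm of a convex body: `ℓ(K) = ∫ ‖x‖_K dγ_n(x)`, where `‖·‖_K` is the
Minkowski gauge of `K`. -/
noncomputable def ellNorm {n : ℕ} (K : Set (EuclideanSpace ℝ (Fin n))) : ℝ :=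
  ∫ x, gauge K x ∂(gaussianMeasure n)

open Set Real
open scoped Pointwise ENNReal

lemma integrable_rexp_neg_mul_sq_norm {V : Type*} [NormedAddCommGroup V] [InnerProductSpace ℝ V]
    [FiniteDimensional ℝ V] [MeasurableSpace V] [BorelSpace V] {b : ℝ} (hb : 0 < b) :
    Integrable (fun v : V => Real.exp (-b * ‖v‖^2)) := by
  have h := (GaussianFourier.integrable_cexp_neg_mul_sq_norm_add (V := V) (b := (b:ℂ))
    (by simpa using hb) 0 (0 : V)).norm
  refine h.congr ?_
  filter_upwards with v
  have : (-(b:ℂ) * (‖v‖:ℂ)^2 + 0 * (inner ℝ (0:V) v : ℝ)) = (((-b * ‖v‖^2 : ℝ)) : ℂ) := by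
    push_cast; ring
  rw [this, Complex.norm_exp, Complex.ofReal_re]

section aux
variable {n : ℕ}

lemma gaussDensCont : Continuous fun x : EuclideanSpace ℝ (Fin n) =>
    (2 * Real.pi) ^ (-(n : ℝ) / 2) * Real.exp (-‖x‖ ^ 2 / 2) := by
  fun_prop

lemma gaussDensMeas : Measurable fun x : EuclideanSpace ℝ (Fin n) =>
    ENNReal.ofReal ((2 * Real.pi) ^ (-(n : ℝ) / 2) * Real.exp (-‖x‖ ^ 2 / 2)) :=
  (gaussDensCont.measurable).ennreal_ofReal

lemma gaussDensNonneg (x : EuclideanSpace ℝ (Fin n)) :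
    0 ≤ (2 * Real.pi) ^ (-(n : ℝ) / 2) * Real.exp (-‖x‖ ^ 2 / 2) := by positivity

lemma integrable_gaussDens : Integrable (fun x : EuclideanSpace ℝ (Fin n) =>
    (2 * Real.pi) ^ (-(n : ℝ) / 2) * Real.exp (-‖x‖ ^ 2 / 2)) := by
  have h := (integrable_rexp_neg_mul_sq_norm (V := EuclideanSpace ℝ (Fin n))
    (b := (1:ℝ)/2) (by norm_num)).const_mul ((2 * Real.pi) ^ (-(n : ℝ) / 2))
  refine h.congr ?_
  filter_upwards with v
  ring_nf

lemma integrable_norm_mul_gaussDens : Integrable (fun x : EuclideanSpace ℝ (Fin n) =>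
    ‖x‖ * ((2 * Real.pi) ^ (-(n : ℝ) / 2) * Real.exp (-‖x‖ ^ 2 / 2))) := by
  set c : ℝ := (2 * Real.pi) ^ (-(n : ℝ) / 2) with hc
  have hc0 : 0 < c := by positivity
  have h := (integrable_rexp_neg_mul_sq_norm (V := EuclideanSpace ℝ (Fin n))
    (b := (1:ℝ)/4) (by norm_num)).const_mul c
  refine h.mono' ?_ ?_
  · exact (continuous_norm.mul gaussDensCont).aestronglyMeasurable
  · filter_upwards with x
    have h1 : ‖x‖ ≤ Real.exp (‖x‖^2/4) := by
      calc ‖x‖ ≤ 1 + ‖x‖^2/4 := by nlinarith [sq_nonneg (‖x‖/2 - 1), norm_nonneg x]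
      _ ≤ Real.exp (‖x‖^2/4) := by
          have := Real.add_one_le_exp (‖x‖^2/4); linarith
    have h2 : ‖x‖ * Real.exp (-‖x‖ ^ 2 / 2) ≤ Real.exp (-(1/4) * ‖x‖^2) := by
      calc ‖x‖ * Real.exp (-‖x‖ ^ 2 / 2) ≤ Real.exp (‖x‖^2/4) * Real.exp (-‖x‖ ^ 2 / 2) :=
            mul_le_mul_of_nonneg_right h1 (Real.exp_pos _).le
        _ = Real.exp (-(1/4) * ‖x‖^2) := by rw [← Real.exp_add]; ring_nf
    have : ‖x‖ * (c * Real.exp (-‖x‖ ^ 2 / 2)) ≤ c * Real.exp (-(1/4) * ‖x‖^2) := by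
      calc ‖x‖ * (c * Real.exp (-‖x‖ ^ 2 / 2)) = c * (‖x‖ * Real.exp (-‖x‖ ^ 2 / 2)) := by ring
        _ ≤ c * Real.exp (-(1/4) * ‖x‖^2) := mul_le_mul_of_nonneg_left h2 hc0.le
    calc ‖‖x‖ * (c * Real.exp (-‖x‖ ^ 2 / 2))‖ = ‖x‖ * (c * Real.exp (-‖x‖ ^ 2 / 2)) := by
          rw [Real.norm_of_nonneg]; positivity
      _ ≤ c * Real.exp (-(1/4) * ‖x‖^2) := this

instance : IsFiniteMeasure (gaussianMeasure n) := by
  constructor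
  rw [gaussianMeasure, withDensity_apply _ MeasurableSet.univ, setLIntegral_univ]
  rw [← ofReal_integral_eq_lintegral_ofReal integrable_gaussDens
    (Filter.Eventually.of_forall gaussDensNonneg)]
  exact ENNReal.ofReal_lt_top

lemma integrable_norm_gaussian :
    Integrable (fun x : EuclideanSpace ℝ (Fin n) => ‖x‖) (gaussianMeasure n) := by
  rw [gaussianMeasure, integrable_withDensity_iff gaussDensMeas
    (Filter.Eventually.of_forall fun x => ENNReal.ofReal_lt_top)]
  refine integrable_norm_mul_gaussDens.congr ?_
  filter_upwards with x
  rw [ENNReal.toReal_ofReal (gaussDensNonneg x)]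

lemma integrable_gauge {K : Set (EuclideanSpace ℝ (Fin n))} (hKconv : Convex ℝ K)
    (hK0 : K ∈ nhds 0) : Integrable (gauge K) (gaussianMeasure n) := by
  obtain ⟨r, hr, hrK⟩ := Metric.mem_nhds_iff.mp hK0
  have hb : gauge K ≤ fun x => ‖x‖ / r := by
    intro x
    calc gauge K x ≤ gauge (Metric.ball (0:_) r) x :=
          gauge_mono (absorbent_ball_zero hr) hrK x
      _ = ‖x‖ / r := gauge_ball hr.le x
  refine (integrable_norm_gaussian.div_const r).mono'
    ((continuous_gauge hKconv hK0).aestronglyMeasurable) ?_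
  filter_upwards with x
  rw [Real.norm_of_nonneg (gauge_nonneg _)]
  exact hb x

end aux

lemma In_ge (n : ℕ) (hn : 2 ≤ n) :
    ((n : ℝ) / Real.exp 1) ^ ((n : ℝ) / 2) ≤ ∫ u in Ioi (0:ℝ), u ^ n * Real.exp (-u^2/2) := by
  set N : ℝ := (n : ℝ) with hN
  have hN2 : (2:ℝ) ≤ N := by rw [hN]; exact_mod_cast hn
  have hNpos : 0 < N := by linarith
  set s : ℝ := Real.sqrt N with hs
  have hs1 : 1 ≤ s := by
    rw [hs, show (1:ℝ) = Real.sqrt 1 by simp]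
    exact Real.sqrt_le_sqrt (by linarith)
  have hspos : 0 < s := by linarith
  have hs2 : s ^ 2 = N := Real.sq_sqrt hNpos.le
  have hlogs : N * Real.log s = Real.log N * (N/2) := by
    rw [hs, Real.log_sqrt hNpos.le]; ring
  set M : ℝ := ((n : ℝ) / Real.exp 1) ^ ((n : ℝ) / 2) with hM
  have hMexp : M = Real.exp ((Real.log N - 1) * (N / 2)) := by
    rw [hM, Real.rpow_def_of_pos (by positivity), Real.log_div hNpos.ne' (Real.exp_pos 1).ne',
      Real.log_exp]
  have hMpos : 0 < M := by rw [hMexp]; exact Real.exp_pos _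
  set f : ℝ → ℝ := fun u => u ^ n * Real.exp (-u^2/2) with hf
  have hfexp : ∀ u : ℝ, 0 < u → f u = Real.exp (N * Real.log u - u^2/2) := by
    intro u hu
    rw [hf]
    simp only
    rw [sub_eq_add_neg, Real.exp_add, hN, Real.exp_nat_mul, Real.exp_log hu]
    ring_nf
  -- pointwise bound on Ioi s
  have keyφ : ∀ u : ℝ, s ≤ u → (Real.log N - 1) * (N / 2) - (u - s)^2 ≤ N * Real.log u - u^2/2 := by
    set φ : ℝ → ℝ := fun u => N * Real.log u - u^2/2 + (u - s)^2 with hφ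
    have hder : ∀ u : ℝ, 0 < u → HasDerivAt φ (N * u⁻¹ - u + 2*(u - s)) u := by
      intro u hu
      have h1 : HasDerivAt (fun u : ℝ => Real.log u) u⁻¹ u := Real.hasDerivAt_log hu.ne'
      have h2 : HasDerivAt (fun u : ℝ => u^2/2) u u := by
        have := (hasDerivAt_pow 2 u).div_const 2
        simpa using this
      have h3 : HasDerivAt (fun u : ℝ => (u - s)^2) (2*(u-s)) u := by
        have := ((hasDerivAt_id u).sub_const s).fun_pow 2
        simp only [id_eq, pow_one, mul_one, Nat.cast_ofNat] at this
        refine this.congr_deriv ?_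
        simp only [Nat.reduceSub, pow_one]
      exact ((h1.const_mul N).sub h2).add h3
    have hmono : MonotoneOn φ (Ici s) := by
      apply monotoneOn_of_deriv_nonneg (convex_Ici s)
      · intro u hu
        exact ((hder u (lt_of_lt_of_le hspos hu)).continuousAt).continuousWithinAt
      · intro u hu
        rw [interior_Ici] at hu
        exact ((hder u (hspos.trans hu)).differentiableAt).differentiableWithinAt
      · intro u hu
        rw [interior_Ici] at hu
        have hu0 : 0 < u := hspos.trans hu
        rw [(hder u hu0).deriv]
        have heq : N * u⁻¹ - u + 2*(u - s) = (u - s)^2 / u := by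
          rw [← hs2]; field_simp
          try ring
        rw [heq]
        positivity
    intro u hu
    have h1 : φ s ≤ φ u := hmono self_mem_Ici hu hu
    rw [hφ] at h1
    simp only [sub_self] at h1
    nlinarith [h1, hlogs, hs2]
  -- pointwise bound on Icc (s - 1/2) s
  have keyψ : ∀ u : ℝ, s - 1/2 ≤ u → u ≤ s →
      (Real.log N - 1) * (N / 2) - 3/8 ≤ N * Real.log u - u^2/2 := by
    set ψ : ℝ → ℝ := fun u => N * Real.log u - u^2/2 + (3/2)*(u - s)^2 with hψ
    have hder : ∀ u : ℝ, 0 < u → HasDerivAt ψ (N * u⁻¹ - u + 3*(u - s)) u := by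
      intro u hu
      have h1 : HasDerivAt (fun u : ℝ => Real.log u) u⁻¹ u := Real.hasDerivAt_log hu.ne'
      have h2 : HasDerivAt (fun u : ℝ => u^2/2) u u := by
        have := (hasDerivAt_pow 2 u).div_const 2
        simpa using this
      have h3 : HasDerivAt (fun u : ℝ => (3/2)*(u - s)^2) (3*(u-s)) u := by
        have := (((hasDerivAt_id u).sub_const s).fun_pow 2).const_mul (3/2 : ℝ)
        simp only [id_eq, pow_one, mul_one, Nat.cast_ofNat] at this
        refine this.congr_deriv ?_
        simp only [Nat.reduceSub, pow_one]; ring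
      exact ((h1.const_mul N).sub h2).add h3
    have hanti : AntitoneOn ψ (Icc (s - 1/2) s) := by
      apply antitoneOn_of_deriv_nonpos (convex_Icc _ _)
      · intro u hu
        have : 0 < u := by have := hu.1; linarith
        exact ((hder u this).continuousAt).continuousWithinAt
      · intro u hu
        rw [interior_Icc] at hu
        have : 0 < u := by have := hu.1; linarith
        exact ((hder u this).differentiableAt).differentiableWithinAt
      · intro u hu
        rw [interior_Icc] at hu
        have hu0 : 0 < u := by have := hu.1; linarith
        rw [(hder u hu0).deriv]
        have h2u : s ≤ 2*u := by have := hu.1; linarith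
        have hprod : 0 ≤ (s - u) * (2*u - s) :=
          mul_nonneg (by linarith [hu.2]) (by linarith)
        have heq : N * u⁻¹ - u + 3*(u - s) = (N - u*u + 3*(u-s)*u) / u := by
          field_simp
          try ring
        rw [heq]
        apply div_nonpos_of_nonpos_of_nonneg _ hu0.le
        nlinarith [hs2, hprod]
    intro u hu1 hu2
    have h1 : ψ s ≤ ψ u := hanti ⟨hu1, hu2⟩ ⟨by linarith, le_refl s⟩ hu2
    rw [hψ] at h1
    simp only [sub_self] at h1
    have husq : (u - s)^2 ≤ 1/4 := by nlinarith [hu1, hu2]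
    nlinarith [h1, hlogs, hs2, husq]
  -- integrability
  have hfint : IntegrableOn f (Ioi 0) := by
    have h := integrableOn_rpow_mul_exp_neg_mul_sq (b := (1:ℝ)/2) (s := (n:ℝ)) (by norm_num)
      (lt_of_lt_of_le neg_one_lt_zero (Nat.cast_nonneg n))
    refine (h.congr_fun (fun x hx => ?_) measurableSet_Ioi)
    simp only [hf]
    rw [Real.rpow_natCast]
    ring_nf
  have hIoc : Ioc (s - 1/2) s ⊆ Ioi (0:ℝ) := by
    intro u hu
    have := hu.1
    simp only [mem_Ioi]
    linarith
  have hIoiS : Ioi s ⊆ Ioi (0:ℝ) := by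
    intro u hu
    have := mem_Ioi.mp hu
    simp only [mem_Ioi]
    linarith
  have hint1 : IntegrableOn f (Ioc (s - 1/2) s) := hfint.mono_set hIoc
  have hint2 : IntegrableOn f (Ioi s) := hfint.mono_set hIoiS
  have hdisj : Disjoint (Ioc (s - 1/2) s) (Ioi s) := by
    rw [Set.disjoint_left]
    intro u h1 h2
    exact absurd h1.2 (not_le.mpr h2)
  have hsplit : (∫ u in Ioc (s - 1/2) s, f u) + ∫ u in Ioi s, f u ≤ ∫ u in Ioi 0, f u := by
    rw [← setIntegral_union hdisj measurableSet_Ioi hint1 hint2]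
    apply setIntegral_mono_set hfint
    · filter_upwards [ae_restrict_mem measurableSet_Ioi] with u hu
      have hu0 : (0:ℝ) < u := hu
      have : (0:ℝ) ≤ u ^ n * Real.exp (-u^2/2) := by positivity
      exact this
    · exact HasSubset.Subset.eventuallyLE (union_subset hIoc hIoiS)
  -- lower bound on Ioc piece
  have hvol : (volume (Ioc (s - 1/2) s)).toReal = 1/2 := by
    rw [Real.volume_Ioc, ENNReal.toReal_ofReal (by linarith)]
    ring
  have hlow2 : M * Real.exp (-(3:ℝ)/8) * (1/2) ≤ ∫ u in Ioc (s - 1/2) s, f u := by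
    have hconst : (∫ _ in Ioc (s - 1/2) s, (M * Real.exp (-(3:ℝ)/8)) : ℝ)
        = M * Real.exp (-(3:ℝ)/8) * (1/2) := by
      rw [setIntegral_const, measureReal_def, hvol, smul_eq_mul]
      ring
    rw [← hconst]
    apply setIntegral_mono_on ?_ hint1 measurableSet_Ioc ?_
    · refine integrableOn_const ?_
      rw [Real.volume_Ioc]
      exact ENNReal.ofReal_lt_top.ne
    · intro u hu
      have hu0 : 0 < u := hIoc hu
      rw [hfexp u hu0, hMexp, ← Real.exp_add]
      apply Real.exp_le_exp.mpr
      have := keyψ u hu.1.le hu.2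
      linarith
  -- lower bound on Ioi piece
  have hgint : Integrable (fun v : ℝ => Real.exp (-v^2)) := by
    have := integrable_exp_neg_mul_sq (b := (1:ℝ)) one_pos
    simpa using this
  have hshift : ∫ u in Ioi s, Real.exp (-(u-s)^2) = Real.sqrt π / 2 := by
    have h1 : ∫ u in Ioi s, Real.exp (-(u-s)^2) = ∫ u in Ioi (0:ℝ), Real.exp (-u^2) := by
      calc ∫ u in Ioi s, Real.exp (-(u-s)^2)
          = ∫ u, indicator (Ioi s) (fun u => Real.exp (-(u-s)^2)) u :=
            (integral_indicator measurableSet_Ioi).symm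
        _ = ∫ u, indicator (Ioi s) (fun u => Real.exp (-(u-s)^2)) (u + s) :=
            (integral_add_right_eq_self _ s).symm
        _ = ∫ u, indicator (Ioi (0:ℝ)) (fun u => Real.exp (-u^2)) u := by
            congr 1
            ext u
            by_cases h : (0:ℝ) < u
            · rw [indicator_of_mem (mem_Ioi.mpr (by linarith : s < u + s)),
                indicator_of_mem (mem_Ioi.mpr h)]
              rw [add_sub_cancel_right]
            · rw [indicator_of_notMem
                (fun hc => h (by have := mem_Ioi.mp hc; linarith)),
                indicator_of_notMem (fun hc => h (mem_Ioi.mp hc))]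
        _ = ∫ u in Ioi (0:ℝ), Real.exp (-u^2) := integral_indicator measurableSet_Ioi
    rw [h1]
    have h2 := integral_gaussian_Ioi 1
    have h3 : ∫ u in Ioi (0:ℝ), Real.exp (-u^2) = ∫ u in Ioi (0:ℝ), Real.exp (-1 * u^2) := by
      congr 1
      ext u
      rw [neg_one_mul]
    rw [h3, h2]
    norm_num
  have hintg : IntegrableOn (fun u : ℝ => M * Real.exp (-(u-s)^2)) (Ioi s) :=
    ((hgint.comp_sub_right s).const_mul M).integrableOn
  have hlow1 : M * (Real.sqrt π / 2) ≤ ∫ u in Ioi s, f u := by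
    have hc : ∫ u in Ioi s, M * Real.exp (-(u-s)^2) = M * (Real.sqrt π / 2) := by
      rw [integral_const_mul, hshift]
    rw [← hc]
    apply setIntegral_mono_on hintg hint2 measurableSet_Ioi ?_
    intro u hu
    have hus : s ≤ u := (mem_Ioi.mp hu).le
    have hu0 : 0 < u := lt_of_lt_of_le hspos hus
    rw [hfexp u hu0, hMexp, ← Real.exp_add]
    apply Real.exp_le_exp.mpr
    have := keyφ u hus
    linarith
  -- numeric bound
  have h17 : (1.7:ℝ) ≤ Real.sqrt π := by
    rw [show (1.7:ℝ) = Real.sqrt (1.7^2) by rw [Real.sqrt_sq (by norm_num)]]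
    apply Real.sqrt_le_sqrt
    nlinarith [Real.pi_gt_three]
  have he36 : (0.36:ℝ) ≤ Real.exp (-(3:ℝ)/8) := by
    have h1 : Real.exp ((3:ℝ)/8) ≤ Real.exp 1 := Real.exp_le_exp.mpr (by norm_num)
    have h2 : Real.exp 1 < 2.7182818286 := Real.exp_one_lt_d9
    have h3 : Real.exp ((3:ℝ)/8) ≤ 2.7182818286 := by linarith
    have h4 : (0.36:ℝ) * Real.exp ((3:ℝ)/8) ≤ 1 := by nlinarith [Real.exp_pos ((3:ℝ)/8)]
    have h5 : -(3:ℝ)/8 = -((3:ℝ)/8) := by ring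
    rw [h5, Real.exp_neg]
    calc (0.36:ℝ) = (0.36 * Real.exp ((3:ℝ)/8)) * (Real.exp ((3:ℝ)/8))⁻¹ := by
          rw [mul_assoc, mul_inv_cancel₀ (Real.exp_pos _).ne']
          ring
      _ ≤ 1 * (Real.exp ((3:ℝ)/8))⁻¹ :=
          mul_le_mul_of_nonneg_right h4 (inv_nonneg.mpr (Real.exp_pos _).le)
      _ = (Real.exp ((3:ℝ)/8))⁻¹ := one_mul _
  have hone : 1 ≤ Real.sqrt π / 2 + Real.exp (-(3:ℝ)/8) * (1/2) := by linarith
  calc M = M * 1 := (mul_one M).symm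
    _ ≤ M * (Real.sqrt π / 2 + Real.exp (-(3:ℝ)/8) * (1/2)) :=
        mul_le_mul_of_nonneg_left hone hMpos.le
    _ = M * Real.exp (-(3:ℝ)/8) * (1/2) + M * (Real.sqrt π / 2) := by ring
    _ ≤ (∫ u in Ioc (s - 1/2) s, f u) + ∫ u in Ioi s, f u := add_le_add hlow2 hlow1
    _ ≤ ∫ u in Ioi 0, f u := hsplit

lemma J_ge (n : ℕ) (hn : 2 ≤ n) {R : ℝ} (hR : 0 < R)
    (hIn : ((n : ℝ) / Real.exp 1) ^ ((n : ℝ) / 2) ≤ ∫ u in Ioi (0:ℝ), u ^ n * Real.exp (-u^2/2)) :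
    ((n : ℝ) / Real.exp 1) ^ ((n : ℝ) / 2) * (R ^ (n+1))⁻¹ ≤
      ∫ t in Ioi (0:ℝ), t ^ n * Real.exp (-(R*t)^2/2) := by
  have h := integral_comp_mul_left_Ioi (fun u => u ^ n * Real.exp (-u^2/2)) 0 hR
  simp only [mul_zero, smul_eq_mul] at h
  have hcalc : ∫ t in Ioi (0:ℝ), t ^ n * Real.exp (-(R*t)^2/2)
      = (R^n)⁻¹ * ∫ t in Ioi (0:ℝ), ((R*t) ^ n * Real.exp (-(R*t)^2/2)) := by
    rw [← integral_const_mul]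
    apply setIntegral_congr_fun measurableSet_Ioi
    intro t _
    simp only
    rw [mul_pow]
    field_simp
    ring
  rw [hcalc, h]
  have hRn : (0:ℝ) < (R^n)⁻¹ * R⁻¹ := by positivity
  calc ((n : ℝ) / Real.exp 1) ^ ((n : ℝ) / 2) * (R ^ (n+1))⁻¹
      = (R^n)⁻¹ * (R⁻¹ * ((n : ℝ) / Real.exp 1) ^ ((n : ℝ) / 2)) := by
        rw [pow_succ, mul_inv]
        ring
    _ ≤ (R^n)⁻¹ * (R⁻¹ * ∫ u in Ioi (0:ℝ), u ^ n * Real.exp (-u^2/2)) := by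
        apply mul_le_mul_of_nonneg_left _ (by positivity)
        exact mul_le_mul_of_nonneg_left hIn (by positivity)

lemma zero_mem_interior_symm {n : ℕ} {K : Set (EuclideanSpace ℝ (Fin n))}
    (hKconv : Convex ℝ K) (hKint : (interior K).Nonempty) (hKsymm : ∀ x ∈ K, -x ∈ K) :
    (0 : EuclideanSpace ℝ (Fin n)) ∈ interior K := by
  obtain ⟨x, hx⟩ := hKint
  have h := Convex.combo_interior_self_mem_interior hKconv hx
    (hKsymm x (interior_subset hx)) (by norm_num : (0:ℝ) < 1/2) (by norm_num : (0:ℝ) ≤ 1/2)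
    (by norm_num)
  have h0 : (1/2 : ℝ) • x + (1/2 : ℝ) • (-x) = 0 := by
    rw [smul_neg, add_neg_cancel]
  rwa [h0] at h

/-- If `K ⊆ C ⊆ R B^n_2` are origin-symmetric convex bodies, then
`ℓ(K) - ℓ(C) ≥ (n/(2πe))^{n/2} R^{-(n+1)} V(C \ K)`. -/
theorem ell_difference_lower_bound (n : ℕ) (hn : 2 ≤ n) (R : ℝ) (hR : 0 < R)
    (K C : Set (EuclideanSpace ℝ (Fin n)))
    (hKconv : Convex ℝ K) (hKcomp : IsCompact K) (hKint : (interior K).Nonempty)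
    (hKsymm : ∀ x ∈ K, -x ∈ K)
    (hCconv : Convex ℝ C) (hCcomp : IsCompact C) (hCint : (interior C).Nonempty)
    (hCsymm : ∀ x ∈ C, -x ∈ C)
    (hKC : K ⊆ C) (hCR : C ⊆ Metric.closedBall 0 R) :
    ((n : ℝ) / (2 * Real.pi * Real.exp 1)) ^ ((n : ℝ) / 2) * R ^ (-(n + 1 : ℝ)) *
        (volume (C \ K)).toReal ≤ ellNorm K - ellNorm C := by
  classical
  have hK0' : (0 : EuclideanSpace ℝ (Fin n)) ∈ interior K :=
    zero_mem_interior_symm hKconv hKint hKsymm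
  have hC0' : (0 : EuclideanSpace ℝ (Fin n)) ∈ interior C :=
    zero_mem_interior_symm hCconv hCint hCsymm
  have hK0 : K ∈ nhds (0 : EuclideanSpace ℝ (Fin n)) := mem_interior_iff_mem_nhds.mp hK0'
  have hC0 : C ∈ nhds (0 : EuclideanSpace ℝ (Fin n)) := mem_interior_iff_mem_nhds.mp hC0'
  have hKabs : Absorbent ℝ K := absorbent_nhds_zero hK0
  set γ : Measure (EuclideanSpace ℝ (Fin n)) := gaussianMeasure n with hγ
  set f : EuclideanSpace ℝ (Fin n) → ℝ := gauge K with hfdef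
  set g : EuclideanSpace ℝ (Fin n) → ℝ := gauge C with hgdef
  have hgf : ∀ x, g x ≤ f x := fun x => gauge_mono hKabs hKC x
  have hfcont : Continuous f := continuous_gauge hKconv hK0
  have hgcont : Continuous g := continuous_gauge hCconv hC0
  have hfint : Integrable f γ := integrable_gauge hKconv hK0
  have hgint : Integrable g γ := integrable_gauge hCconv hC0
  set c : ℝ := (2 * Real.pi) ^ (-(n : ℝ) / 2) with hc
  have hcpos : 0 < c := by rw [hc]; positivity
  set V : ℝ≥0∞ := volume (C \ K) with hV
  have hVfin : V ≠ ⊤ := by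
    rw [hV]
    exact ((measure_mono diff_subset).trans_lt hCcomp.measure_lt_top).ne
  -- lintegral quantities
  set F : ℝ≥0∞ := ∫⁻ x, ENNReal.ofReal (f x) ∂γ with hF
  set G : ℝ≥0∞ := ∫⁻ x, ENNReal.ofReal (g x) ∂γ with hG
  have hFfin : F ≠ ⊤ := by
    rw [hF]
    exact ((hasFiniteIntegral_iff_ofReal
      (Filter.Eventually.of_forall fun x => gauge_nonneg _)).mp hfint.hasFiniteIntegral).ne
  have hGfin : G ≠ ⊤ := by
    rw [hG]
    exact ((hasFiniteIntegral_iff_ofReal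
      (Filter.Eventually.of_forall fun x => gauge_nonneg _)).mp hgint.hasFiniteIntegral).ne
  have hellK : ellNorm K = F.toReal := by
    rw [ellNorm, hF]
    exact integral_eq_lintegral_of_nonneg_ae
      (Filter.Eventually.of_forall fun x => gauge_nonneg _) hfcont.aestronglyMeasurable
  have hellC : ellNorm C = G.toReal := by
    rw [ellNorm, hG]
    exact integral_eq_lintegral_of_nonneg_ae
      (Filter.Eventually.of_forall fun x => gauge_nonneg _) hgcont.aestronglyMeasurable
  -- layer cake
  set A : ℝ → ℝ≥0∞ := fun t => γ {x | t < f x} with hA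
  set B : ℝ → ℝ≥0∞ := fun t => γ {x | t < g x} with hB
  have hlayK : F = ∫⁻ t in Ioi (0:ℝ), A t := by
    rw [hF]
    exact lintegral_eq_lintegral_meas_lt γ
      (Filter.Eventually.of_forall fun x => gauge_nonneg _) hfcont.measurable.aemeasurable
  have hlayC : G = ∫⁻ t in Ioi (0:ℝ), B t := by
    rw [hG]
    exact lintegral_eq_lintegral_meas_lt γ
      (Filter.Eventually.of_forall fun x => gauge_nonneg _) hgcont.measurable.aemeasurable
  have hBanti : Antitone B := by
    intro t1 t2 h12
    exact measure_mono (fun x hx => lt_of_le_of_lt h12 hx)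
  have hAanti : Antitone A := by
    intro t1 t2 h12
    exact measure_mono (fun x hx => lt_of_le_of_lt h12 hx)
  have hBmeas : Measurable B := hBanti.measurable
  have hAmeas : Measurable A := hAanti.measurable
  have hBA : ∀ t, B t ≤ A t := fun t => measure_mono (fun x hx => lt_of_lt_of_le hx (hgf x))
  set D : ℝ≥0∞ := ∫⁻ t in Ioi (0:ℝ), (A t - B t) with hD
  have hFDG : F = D + G := by
    rw [hlayK, hlayC, hD, ← lintegral_add_right _ hBmeas]
    apply lintegral_congr
    intro t
    exact (tsub_add_cancel_of_le (hBA t)).symm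
  have hDfin : D ≠ ⊤ := by
    intro hDT
    rw [hFDG, hDT, top_add] at hFfin
    exact hFfin rfl
  -- per-t key bound
  have key : ∀ t, t ∈ Ioi (0:ℝ) →
      ENNReal.ofReal (c * (t ^ n * Real.exp (-(R*t)^2/2))) * V ≤ A t - B t := by
    intro t ht
    rw [mem_Ioi] at ht
    set W : Set (EuclideanSpace ℝ (Fin n)) := t • C \ t • K with hW
    -- measurability of W
    have htCmeas : MeasurableSet (t • C) := ((hCcomp.smul t).isClosed).measurableSet
    have htKmeas : MeasurableSet (t • K) := ((hKcomp.smul t).isClosed).measurableSet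
    have hWmeas : MeasurableSet W := htCmeas.diff htKmeas
    -- inclusion in the slice difference, up to a null set
    have hNnull : γ {x | f x = t} = 0 := by
      have hsub : {x : EuclideanSpace ℝ (Fin n) | f x = t} ⊆ t • frontier K := by
        intro x hx
        rw [mem_setOf_eq] at hx
        have h1 : gauge K (t⁻¹ • x) = 1 := by
          rw [gauge_smul_of_nonneg (inv_nonneg.mpr ht.le), smul_eq_mul, ← hfdef, hx,
            inv_mul_cancel₀ ht.ne']
        have h2 : t⁻¹ • x ∈ frontier K := (gauge_eq_one_iff_mem_frontier hKconv hK0).mp h1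
        exact (mem_smul_set_iff_inv_smul_mem₀ ht.ne' _ _).mpr h2
      have hvol0 : volume ({x : EuclideanSpace ℝ (Fin n) | f x = t}) = 0 := by
        apply measure_mono_null hsub
        rw [Measure.addHaar_smul]
        rw [hKconv.addHaar_frontier volume]
        exact mul_zero _
      rw [hγ, gaussianMeasure]
      exact (withDensity_absolutelyContinuous volume _) hvol0
    have hsubset : W \ {x | f x = t} ⊆ {x | t < f x} \ {x | t < g x} := by
      rintro x ⟨⟨hxC, hxK⟩, hxne⟩
      rw [mem_setOf_eq] at hxne
      constructor
      · rw [mem_setOf_eq]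
        have hle : t ≤ f x := by
          by_contra hlt
          push_neg at hlt
          apply hxK
          have h1 : gauge K (t⁻¹ • x) < 1 := by
            rw [gauge_smul_of_nonneg (inv_nonneg.mpr ht.le), smul_eq_mul, ← hfdef]
            rw [inv_mul_lt_iff₀ ht, mul_one]
            exact hlt
          have h2 : t⁻¹ • x ∈ K :=
            gauge_lt_one_subset_self hKconv (interior_subset hK0') hKabs h1
          exact (mem_smul_set_iff_inv_smul_mem₀ ht.ne' _ _).mpr h2
        exact hle.lt_of_ne (fun h => hxne h.symm)
      · rw [mem_setOf_eq]
        push_neg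
        exact gauge_le_of_mem ht.le hxC
    have hWle : γ W ≤ A t - B t := by
      have h1 : γ W ≤ γ ({x | t < f x} \ {x | t < g x}) := by
        calc γ W ≤ γ ((W \ {x | f x = t}) ∪ {x | f x = t}) :=
              measure_mono (subset_diff_union _ _)
          _ ≤ γ (W \ {x | f x = t}) + γ {x | f x = t} := measure_union_le _ _
          _ = γ (W \ {x | f x = t}) := by rw [hNnull, add_zero]
          _ ≤ γ ({x | t < f x} \ {x | t < g x}) := measure_mono hsubset
      have h2 : γ ({x | t < f x} \ {x | t < g x}) = A t - B t := by
        apply measure_diff (fun x hx => lt_of_lt_of_le hx (hgf x))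
        · exact (hgcont.measurable measurableSet_Ioi).nullMeasurableSet
        · exact (measure_lt_top γ _).ne
      rw [h2] at h1
      exact h1
    -- lower bound for γ W
    have hnormW : ∀ x ∈ W, ‖x‖ ≤ R * t := by
      rintro x ⟨hxC, -⟩
      obtain ⟨y, hy, rfl⟩ := hxC
      have hyR : ‖y‖ ≤ R := by
        have := hCR hy
        rwa [Metric.mem_closedBall, dist_zero_right] at this
      rw [norm_smul, Real.norm_of_nonneg ht.le]
      calc t * ‖y‖ ≤ t * R := mul_le_mul_of_nonneg_left hyR ht.le
        _ = R * t := mul_comm _ _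
    have hγW : ENNReal.ofReal (c * Real.exp (-(R*t)^2/2)) * volume W ≤ γ W := by
      rw [hγ, gaussianMeasure, withDensity_apply _ hWmeas]
      rw [← setLIntegral_const W _]
      apply setLIntegral_mono gaussDensMeas
      intro x hx
      apply ENNReal.ofReal_le_ofReal
      apply mul_le_mul_of_nonneg_left _ hcpos.le
      apply Real.exp_le_exp.mpr
      have h1 : ‖x‖^2 ≤ (R*t)^2 := by
        apply sq_le_sq' _ (hnormW x hx)
        calc -(R*t) ≤ 0 := neg_nonpos.mpr (by positivity)
          _ ≤ ‖x‖ := norm_nonneg x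
      linarith
    -- volume of W
    have hWvol : volume W = ENNReal.ofReal (t^n) * V := by
      have hsd : t • (C \ K) = W := by
        rw [hW]
        have hinj : Function.Injective (fun x : EuclideanSpace ℝ (Fin n) => t • x) :=
          smul_right_injective _ ht.ne'
        rw [← image_smul, image_diff hinj, image_smul, image_smul]
      rw [← hsd, Measure.addHaar_smul, finrank_euclideanSpace_fin, abs_of_pos (pow_pos ht n), hV]
    calc ENNReal.ofReal (c * (t ^ n * Real.exp (-(R*t)^2/2))) * V
        = ENNReal.ofReal (c * Real.exp (-(R*t)^2/2)) * (ENNReal.ofReal (t^n) * V) := by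
          have harr : c * (t ^ n * Real.exp (-(R*t)^2/2))
              = (c * Real.exp (-(R*t)^2/2)) * t^n := by ring
          rw [harr, ENNReal.ofReal_mul (by positivity), mul_assoc]
      _ = ENNReal.ofReal (c * Real.exp (-(R*t)^2/2)) * volume W := by rw [hWvol]
      _ ≤ γ W := hγW
      _ ≤ A t - B t := hWle
  -- integrate the key bound
  have hDlow : (∫⁻ t in Ioi (0:ℝ),
      ENNReal.ofReal (c * (t ^ n * Real.exp (-(R*t)^2/2))) * V) ≤ D := by
    rw [hD]
    exact setLIntegral_mono (hAmeas.sub hBmeas) key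
  have hcont : Continuous fun t : ℝ => c * (t ^ n * Real.exp (-(R*t)^2/2)) := by fun_prop
  have hpull : (∫⁻ t in Ioi (0:ℝ), ENNReal.ofReal (c * (t ^ n * Real.exp (-(R*t)^2/2))) * V)
      = ENNReal.ofReal (∫ t in Ioi (0:ℝ), c * (t ^ n * Real.exp (-(R*t)^2/2))) * V := by
    rw [lintegral_mul_const _ (hcont.measurable.ennreal_ofReal)]
    congr 1
    rw [← ofReal_integral_eq_lintegral_ofReal]
    · -- IntegrableOn
      apply Integrable.const_mul
      have h := integrableOn_rpow_mul_exp_neg_mul_sq (b := R^2/2) (s := (n:ℝ)) (by positivity)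
        (lt_of_lt_of_le neg_one_lt_zero (Nat.cast_nonneg n))
      refine (h.congr_fun (fun x hx => ?_) measurableSet_Ioi)
      beta_reduce
      rw [Real.rpow_natCast, mul_pow]
      ring_nf
    · filter_upwards [ae_restrict_mem measurableSet_Ioi] with t ht
      have ht0 : (0:ℝ) < t := ht
      exact mul_nonneg hcpos.le (mul_nonneg (pow_nonneg ht0.le n) (Real.exp_pos _).le)
  -- real integral lower bound
  have hIn := In_ge n hn
  have hJ := J_ge n hn hR hIn
  have hJ2 : c * (((n : ℝ) / Real.exp 1) ^ ((n : ℝ) / 2) * (R ^ (n+1))⁻¹)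
      ≤ ∫ t in Ioi (0:ℝ), c * (t ^ n * Real.exp (-(R*t)^2/2)) := by
    rw [integral_const_mul]
    exact mul_le_mul_of_nonneg_left hJ hcpos.le
  -- final assembly
  have hfinal : ENNReal.ofReal (c * (((n : ℝ) / Real.exp 1) ^ ((n : ℝ) / 2) * (R ^ (n+1))⁻¹)) * V
      ≤ D := by
    refine le_trans ?_ (le_trans (le_of_eq hpull.symm) hDlow)
    exact mul_le_mul_left (ENNReal.ofReal_le_ofReal hJ2) V
  -- identify target with the ENNReal quantity
  have hscal : ((n : ℝ) / (2 * Real.pi * Real.exp 1)) ^ ((n : ℝ) / 2) * R ^ (-(n + 1 : ℝ))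
      = c * (((n : ℝ) / Real.exp 1) ^ ((n : ℝ) / 2) * (R ^ (n+1))⁻¹) := by
    have h1 : ((n : ℝ) / (2 * Real.pi * Real.exp 1)) ^ ((n : ℝ) / 2)
        = c * ((n : ℝ) / Real.exp 1) ^ ((n : ℝ) / 2) := by
      have hsplit : (n : ℝ) / (2 * Real.pi * Real.exp 1)
          = (2 * Real.pi)⁻¹ * ((n : ℝ) / Real.exp 1) := by
        field_simp
      rw [hsplit, Real.mul_rpow (by positivity) (by positivity), hc]
      congr 1
      rw [← Real.rpow_neg_one (2 * Real.pi), ← Real.rpow_mul (by positivity)]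
      congr 1
      ring
    have h2 : R ^ (-(n + 1 : ℝ)) = (R ^ (n+1))⁻¹ := by
      rw [show (-(n + 1 : ℝ)) = -(((n+1 : ℕ)) : ℝ) by push_cast; ring,
        Real.rpow_neg hR.le, Real.rpow_natCast]
    rw [h1, h2]
    ring
  have htargetV : ((n : ℝ) / (2 * Real.pi * Real.exp 1)) ^ ((n : ℝ) / 2) * R ^ (-(n + 1 : ℝ)) *
      (volume (C \ K)).toReal
      = (ENNReal.ofReal (c * (((n : ℝ) / Real.exp 1) ^ ((n : ℝ) / 2) * (R ^ (n+1))⁻¹)) * V).toReal := by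
    rw [ENNReal.toReal_mul, ENNReal.toReal_ofReal (by positivity), hscal, hV]
  rw [htargetV, hellK, hellC]
  have hFtoReal : F.toReal = D.toReal + G.toReal := by
    rw [hFDG, ENNReal.toReal_add hDfin hGfin]
  rw [hFtoReal]
  have := ENNReal.toReal_mono hDfin hfinal
  linarith
end

section
/- (Ball–Barthe inequality) If u_1,...,u_k ∈ S^{n-1} and c_1,...,c_k > 0 satisfy ∑_{i=1}^k c_i u_i ⊗ u_i = Id_n, then for any t_1,...,t_k > 0, det(∑_{i=1}^k t_i c_i u_i ⊗ u_i) ≥ ∏_{i=1}^k t_i^{c_i}. -/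
open Matrix

private lemma bb_stepA (n k : ℕ) (u : Fin k → Fin n → ℝ) (a : Fin k → ℝ) :
    Matrix.det (∑ i, a i • vecMulVec (u i) (u i)) =
      ∑ f : Fin n → Fin k, (∏ j, a (f j) * u (f j) j) *
        Matrix.det (Matrix.of fun j l => u (f j) l) := by
  have hM : (∑ i, a i • vecMulVec (u i) (u i)) =
      Matrix.of (fun j => ∑ i, (a i * u i j) • u i) := by
    ext j l
    simp [Matrix.sum_apply, vecMulVec_apply, mul_assoc, Finset.sum_apply]
  rw [hM]
  have h1 : Matrix.det (Matrix.of (fun j => ∑ i, (a i * u i j) • u i)) =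
      Matrix.detRowAlternating (Matrix.of (fun j => ∑ i, (a i * u i j) • u i)) := rfl
  rw [h1]
  have h2 := Matrix.detRowAlternating.toMultilinearMap.map_sum
    (fun (j : Fin n) (i : Fin k) => (a i * u i j) • u i)
  simp only [AlternatingMap.coe_multilinearMap] at h2
  rw [show (Matrix.of (fun j => ∑ i, (a i * u i j) • u i) : Matrix (Fin n) (Fin n) ℝ)
      = (fun j => ∑ i, (a i * u i j) • u i) from rfl, h2]
  refine Finset.sum_congr rfl fun f _ => ?_
  have h3 := Matrix.detRowAlternating.toMultilinearMap.map_smul_univ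
    (fun j => a (f j) * u (f j) j) (fun j => u (f j))
  simp only [AlternatingMap.coe_multilinearMap] at h3
  rw [h3]
  rfl

private lemma bb_key (n k : ℕ) (u : Fin k → Fin n → ℝ) (a : Fin k → ℝ) :
    (Nat.factorial n : ℝ) * Matrix.det (∑ i, a i • vecMulVec (u i) (u i)) =
      ∑ f : Fin n → Fin k, (∏ j, a (f j)) *
        (Matrix.det (Matrix.of fun j l => u (f j) l)) ^ 2 := by
  set F : (Fin n → Fin k) → ℝ := fun f => Matrix.det (Matrix.of fun j l => u (f j) l) with hF
  have hsigma : ∀ σ : Equiv.Perm (Fin n),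
      Matrix.det (∑ i, a i • vecMulVec (u i) (u i)) =
      ∑ f : Fin n → Fin k, (∏ j, a (f j)) *
        (((Equiv.Perm.sign σ : ℤ) : ℝ) * (∏ j, u (f (σ j)) j) * F f) := by
    intro σ
    rw [bb_stepA n k u a]
    rw [← Equiv.sum_comp (Equiv.arrowCongr σ.symm (Equiv.refl (Fin k)))
      (fun f => (∏ j, a (f j) * u (f j) j) * F f)]
    refine Finset.sum_congr rfl fun f _ => ?_
    have hEf : (Equiv.arrowCongr σ.symm (Equiv.refl (Fin k))) f = f ∘ σ := by
      ext j; simp [Equiv.arrowCongr]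
    rw [hEf]
    have hFcomp : F (f ∘ σ) = ((Equiv.Perm.sign σ : ℤ) : ℝ) * F f := by
      have : (Matrix.of fun j l => u ((f ∘ σ) j) l) =
          (Matrix.of fun j l => u (f j) l).submatrix σ id := by
        ext j l; simp [Matrix.submatrix]
      rw [hF]
      simp only [this]
      rw [Matrix.det_permute]
    rw [hFcomp]
    have hprod : (∏ j, a ((f ∘ σ) j) * u ((f ∘ σ) j) j)
        = (∏ j, a (f j)) * ∏ j, u (f (σ j)) j := by
      rw [Finset.prod_mul_distrib]
      congr 1
      exact Equiv.prod_comp σ (fun j => a (f j))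
    rw [hprod]; ring
  have hdet : ∀ f : Fin n → Fin k,
      ∑ σ : Equiv.Perm (Fin n), ((Equiv.Perm.sign σ : ℤ) : ℝ) * ∏ j, u (f (σ j)) j = F f := by
    intro f
    rw [hF]
    simp only []
    rw [Matrix.det_apply]
    simp [Units.smul_def, zsmul_eq_mul]
  calc (Nat.factorial n : ℝ) * Matrix.det (∑ i, a i • vecMulVec (u i) (u i))
      = ∑ σ : Equiv.Perm (Fin n), Matrix.det (∑ i, a i • vecMulVec (u i) (u i)) := by
        rw [Finset.sum_const, Finset.card_univ, Fintype.card_perm, Fintype.card_fin,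
          nsmul_eq_mul]
    _ = ∑ σ : Equiv.Perm (Fin n), ∑ f : Fin n → Fin k, (∏ j, a (f j)) *
          (((Equiv.Perm.sign σ : ℤ) : ℝ) * (∏ j, u (f (σ j)) j) * F f) := by
        exact Finset.sum_congr rfl fun σ _ => hsigma σ
    _ = ∑ f : Fin n → Fin k, (∏ j, a (f j)) *
          ((∑ σ : Equiv.Perm (Fin n), ((Equiv.Perm.sign σ : ℤ) : ℝ) * ∏ j, u (f (σ j)) j) * F f) := by
        rw [Finset.sum_comm]
        refine Finset.sum_congr rfl fun f _ => ?_
        rw [Finset.sum_mul, Finset.mul_sum]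
    _ = ∑ f : Fin n → Fin k, (∏ j, a (f j)) * (F f) ^ 2 := by
        refine Finset.sum_congr rfl fun f _ => ?_
        rw [hdet f]; simp only [hF]; ring

private lemma bb_det_one_add (n : ℕ) (u : Fin n → ℝ) (ci : ℝ) (hu : ∑ j, u j ^ 2 = 1) :
    Matrix.det (1 + ci • vecMulVec u u) = 1 + ci := by
  have h1 : ci • vecMulVec u u = vecMulVec (ci • u) u := by
    ext j l; simp [vecMulVec_apply, mul_assoc]
  rw [h1, vecMulVec_eq (Fin 1), Matrix.det_one_add_replicateCol_mul_replicateRow]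
  congr 1
  simp only [dotProduct, Pi.smul_apply, smul_eq_mul]
  have h2 : ∑ x, u x * (ci * u x) = ci * ∑ j, u j ^ 2 := by
    rw [Finset.mul_sum]; exact Finset.sum_congr rfl fun x _ => by ring
  rw [h2, hu, mul_one]

private lemma bb_prod_ite (n kk : ℕ) (f : Fin n → Fin kk) (i : Fin kk) :
    (∏ j, (if f j = i then (2:ℝ) else 1)) =
      2 ^ (Finset.univ.filter fun j => f j = i).card := by
  rw [Finset.prod_ite, Finset.prod_const, Finset.prod_const, one_pow, mul_one]

private lemma bb_prod_count (n kk : ℕ) (t : Fin kk → ℝ) (f : Fin n → Fin kk) :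
    ∏ j, t (f j) = ∏ i, t i ^ (Finset.univ.filter fun j => f j = i).card := by
  rw [Finset.prod_comp t f]
  apply Finset.prod_subset (Finset.subset_univ _)
  intro i _ hi
  have : (Finset.univ.filter fun j => f j = i).card = 0 := by
    rw [Finset.card_eq_zero, Finset.filter_eq_empty_iff]
    intro j _
    intro h; exact hi (Finset.mem_image.mpr ⟨j, Finset.mem_univ j, h⟩)
  rw [this, pow_zero]

private lemma bb_det_zero (n kk : ℕ) (u : Fin kk → Fin n → ℝ) (f : Fin n → Fin kk)
    (hf : ¬ Function.Injective f) : Matrix.det (Matrix.of fun j l => u (f j) l) = 0 := by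
  rw [Function.not_injective_iff] at hf
  obtain ⟨j, j', hjj, hne⟩ := hf
  exact Matrix.det_zero_of_row_eq hne (by ext l; simp [hjj])

/-- Ball–Barthe inequality: if unit vectors `u i` and weights `c i > 0` satisfy
`∑ i, c i • u i ⊗ u i = Id_n`, then for all `t i > 0`,
`det (∑ i, t i c i • u i ⊗ u i) ≥ ∏ i, t i ^ (c i)`. -/
theorem ball_barthe (n k : ℕ) (u : Fin k → Fin n → ℝ) (c t : Fin k → ℝ)
    (hu : ∀ i, ∑ j, u i j ^ 2 = 1) (hc : ∀ i, 0 < c i) (ht : ∀ i, 0 < t i)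
    (hiso : ∑ i, c i • vecMulVec (u i) (u i) = (1 : Matrix (Fin n) (Fin n) ℝ)) :
    ∏ i, t i ^ c i ≤ Matrix.det (∑ i, (t i * c i) • vecMulVec (u i) (u i)) := by
  have hN : (0:ℝ) < (Nat.factorial n : ℝ) := by positivity
  set F : (Fin n → Fin k) → ℝ := fun f => Matrix.det (Matrix.of fun j l => u (f j) l) with hF
  set w : (Fin n → Fin k) → ℝ :=
    fun f => (∏ j, c (f j)) * F f ^ 2 / (Nat.factorial n : ℝ) with hw
  set m : (Fin n → Fin k) → Fin k → ℕ :=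
    fun f i => (Finset.univ.filter fun j => f j = i).card with hm
  set z : (Fin n → Fin k) → ℝ := fun f => ∏ j, t (f j) with hz
  have hw0 : ∀ f, 0 ≤ w f := fun f => by
    apply div_nonneg _ hN.le
    exact mul_nonneg (Finset.prod_nonneg fun j _ => (hc (f j)).le) (sq_nonneg _)
  have hz0 : ∀ f, 0 < z f := fun f => Finset.prod_pos fun j _ => ht (f j)
  -- total weight is 1
  have hsum1 : ∑ f : Fin n → Fin k, (∏ j, c (f j)) * F f ^ 2 = (Nat.factorial n : ℝ) := by
    have h := bb_key n k u c
    rw [hiso, Matrix.det_one, mul_one] at h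
    exact h.symm
  have hW : ∑ f : Fin n → Fin k, w f = 1 := by
    rw [hw]
    simp only [← Finset.sum_div]
    rw [hsum1, div_self hN.ne']
  -- determinant as weighted sum
  have hDet : Matrix.det (∑ i, (t i * c i) • vecMulVec (u i) (u i)) =
      ∑ f : Fin n → Fin k, w f * z f := by
    have h := bb_key n k u (fun i => t i * c i)
    have h2 : ∀ f : Fin n → Fin k, (∏ j, t (f j) * c (f j)) *
        (Matrix.det (Matrix.of fun j l => u (f j) l)) ^ 2 =
        (w f * z f) * (Nat.factorial n : ℝ) := by
      intro f
      rw [hw, hz, hF, Finset.prod_mul_distrib]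
      field_simp
    rw [Finset.sum_congr rfl (fun f _ => h2 f), ← Finset.sum_mul,
      mul_comm (Nat.factorial n : ℝ)] at h
    exact mul_right_cancel₀ hN.ne' h
  -- marginal identities : ∑ f, w f * m f i = c i
  have he : ∀ i, ∑ f : Fin n → Fin k, w f * ((m f i : ℕ) : ℝ) = c i := by
    intro i
    have hkey := bb_key n k u (fun l => if l = i then 2 * c l else c l)
    have hMat : (∑ l, (if l = i then 2 * c l else c l) • vecMulVec (u l) (u l)) =
        1 + c i • vecMulVec (u i) (u i) := by
      rw [← hiso]
      rw [show (∑ l, (if l = i then 2 * c l else c l) • vecMulVec (u l) (u l)) =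
          ∑ l, (c l • vecMulVec (u l) (u l) +
            (if l = i then c i • vecMulVec (u i) (u i) else 0)) from
        Finset.sum_congr rfl fun l _ => by
          by_cases hl : l = i
          · subst hl; simp [two_mul, add_smul]
          · simp [hl]]
      rw [Finset.sum_add_distrib, Finset.sum_ite_eq' Finset.univ i]
      simp [add_comm]
    rw [hMat, bb_det_one_add n (u i) (c i) (hu i)] at hkey
    have hProdA : ∀ f : Fin n → Fin k,
        (∏ j, (if f j = i then 2 * c (f j) else c (f j))) =
          (∏ j, c (f j)) * 2 ^ (m f i) := by
      intro f
      rw [show (∏ j, (if f j = i then 2 * c (f j) else c (f j))) =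
          ∏ j, c (f j) * (if f j = i then (2:ℝ) else 1) from
        Finset.prod_congr rfl fun j _ => by by_cases hj : f j = i <;> simp [hj, mul_comm]]
      rw [Finset.prod_mul_distrib, bb_prod_ite n k f i, hm]
    have hkey2 : ∑ f : Fin n → Fin k, w f * (2:ℝ) ^ (m f i) = 1 + c i := by
      have h2 : ∀ f : Fin n → Fin k,
          (∏ j, (if f j = i then 2 * c (f j) else c (f j))) *
            (Matrix.det (Matrix.of fun j l => u (f j) l)) ^ 2 =
          (w f * (2:ℝ) ^ (m f i)) * (Nat.factorial n : ℝ) := by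
        intro f
        rw [hProdA f, hw, hF]
        field_simp
      rw [Finset.sum_congr rfl (fun f _ => h2 f), ← Finset.sum_mul] at hkey
      have := mul_right_cancel₀ hN.ne' (by linarith [hkey] :
        (∑ f : Fin n → Fin k, w f * (2:ℝ) ^ (m f i)) * (Nat.factorial n : ℝ)
          = (1 + c i) * (Nat.factorial n : ℝ))
      exact this
    -- for each f, either w f = 0 or m f i ≤ 1
    have hsmall : ∀ f : Fin n → Fin k, w f * ((m f i : ℕ) : ℝ) =
        w f * ((2:ℝ) ^ (m f i) - 1) := by
      intro f
      by_cases hinj : Function.Injective f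
      · have hle : m f i ≤ 1 := by
          rw [hm]
          apply Finset.card_le_one.mpr
          intro j hj j' hj'
          simp only [Finset.mem_filter] at hj hj'
          exact hinj (hj.2.trans hj'.2.symm)
        interval_cases h : m f i <;> norm_num
      · have h0 : F f = 0 := bb_det_zero n k u f hinj
        simp only [hw, h0]
        simp
      -- end cases
    calc ∑ f : Fin n → Fin k, w f * ((m f i : ℕ) : ℝ)
        = ∑ f : Fin n → Fin k, (w f * (2:ℝ) ^ (m f i) - w f) := by
          refine Finset.sum_congr rfl fun f _ => ?_
          rw [hsmall f]; ring
      _ = (∑ f : Fin n → Fin k, w f * (2:ℝ) ^ (m f i)) - ∑ f : Fin n → Fin k, w f := by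
          rw [Finset.sum_sub_distrib]
      _ = c i := by rw [hkey2, hW]; ring
  -- the chain of (in)equalities
  have hzw : ∀ f : Fin n → Fin k, z f ^ (w f) = ∏ i, t i ^ (w f * ((m f i : ℕ) : ℝ)) := by
    intro f
    simp only [hz]
    rw [bb_prod_count n k t f]
    rw [← Real.finset_prod_rpow Finset.univ _ (fun i _ => pow_nonneg (ht i).le _) (w f)]
    refine Finset.prod_congr rfl fun i _ => ?_
    simp only [hm]
    rw [← Real.rpow_natCast (t i) ((Finset.univ.filter fun j => f j = i).card),
      ← Real.rpow_mul (ht i).le]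
    rw [mul_comm]
  calc ∏ i, t i ^ c i
      = ∏ i, t i ^ (∑ f : Fin n → Fin k, w f * ((m f i : ℕ) : ℝ)) := by
        exact Finset.prod_congr rfl fun i _ => by rw [he i]
    _ = ∏ i, ∏ f : Fin n → Fin k, t i ^ (w f * ((m f i : ℕ) : ℝ)) := by
        exact Finset.prod_congr rfl fun i _ =>
          Real.rpow_sum_of_pos (ht i) _ _
    _ = ∏ f : Fin n → Fin k, ∏ i, t i ^ (w f * ((m f i : ℕ) : ℝ)) := Finset.prod_comm
    _ = ∏ f : Fin n → Fin k, z f ^ (w f) := by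
        exact Finset.prod_congr rfl fun f _ => (hzw f).symm
    _ ≤ ∑ f : Fin n → Fin k, w f * z f := by
        exact Real.geom_mean_le_arith_mean_weighted Finset.univ w z
          (fun f _ => hw0 f) hW (fun f _ => (hz0 f).le)
    _ = Matrix.det (∑ i, (t i * c i) • vecMulVec (u i) (u i)) := hDet.symm
end

section
/- Let η ∈ (0, π/8) and let u, u' ∈ S¹ with |⟨u,u'⟩| ≤ cos η. If v ∈ S¹ satisfies cos(3π/8) ≤ |⟨v, (u−u')/‖u−u'‖⟩| ≤ cos(π/8) and cos(3π/8) ≤ |⟨v, (u+u')/‖u+u'‖⟩| ≤ cos(π/8), then | |⟨v,u⟩| − |⟨v,u'⟩| | ≥ η/5. -/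
open scoped RealInnerProductSpace

lemma sin_pi_div_eight_gt_038 : (0.38 : ℝ) < Real.sin (Real.pi / 8) := by
  have hsqrt2 : Real.sqrt 2 < 1.42 := by
    rw [show (1.42 : ℝ) = 71 / 50 by norm_num]
    rw [Real.sqrt_lt' (by norm_num)]
    norm_num
  rw [Real.sin_pi_div_eight]
  have h76 : (0.76 : ℝ) ^ 2 < 2 - Real.sqrt 2 := by nlinarith
  have : (0.76 : ℝ) < Real.sqrt (2 - Real.sqrt 2) := (Real.lt_sqrt (by norm_num)).mpr h76
  linarith

lemma sin_half_ge (η : ℝ) (hη : 0 < η) (hη' : η < Real.pi / 8) :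
    0.49 * η ≤ Real.sin (η / 2) := by
  have hπ' := Real.pi_lt_d2
  have hx : η / 2 ≤ 1 := by nlinarith
  have := Real.sin_gt_sub_cube (show 0 < η / 2 by linarith)
  nlinarith [sq_nonneg η]

/-- Let `η ∈ (0, π/8)` and `u, u'` unit vectors in the plane with `|⟪u,u'⟫| ≤ cos η`. If a unit
vector `v` makes an angle between `π/8` and `3π/8` with both `(u-u')/‖u-u'‖` and
`(u+u')/‖u+u'‖`, then `||⟪v,u⟫| - |⟪v,u'⟫|| ≥ η/5`. -/
theorem abs_scalar_product_gap (η : ℝ) (hη : 0 < η) (hη' : η < Real.pi / 8)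
    (u u' v : EuclideanSpace ℝ (Fin 2))
    (hu : ‖u‖ = 1) (hu' : ‖u'‖ = 1) (hv : ‖v‖ = 1)
    (huu' : |⟪u, u'⟫| ≤ Real.cos η)
    (h1 : Real.cos (3 * Real.pi / 8) ≤ |⟪v, ‖u - u'‖⁻¹ • (u - u')⟫|)
    (h1' : |⟪v, ‖u - u'‖⁻¹ • (u - u')⟫| ≤ Real.cos (Real.pi / 8))
    (h2 : Real.cos (3 * Real.pi / 8) ≤ |⟪v, ‖u + u'‖⁻¹ • (u + u')⟫|)
    (h2' : |⟪v, ‖u + u'‖⁻¹ • (u + u')⟫| ≤ Real.cos (Real.pi / 8)) :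
    η / 5 ≤ |(|⟪v, u⟫| - |⟪v, u'⟫|)| := by
  have hπ := Real.pi_pos
  have hπ' := Real.pi_lt_d2
  set a := ⟪v, u⟫ with ha
  set b := ⟪v, u'⟫ with hb
  set t := ⟪u, u'⟫ with ht
  have habs := abs_le.mp huu'
  -- half-angle
  have hs2 : Real.sin (η / 2) ^ 2 = (1 - Real.cos η) / 2 := by
    have := Real.sin_sq_eq_half_sub (η / 2)
    rw [show 2 * (η / 2) = η by ring] at this
    linarith
  have hsinpos : 0 < Real.sin (η / 2) :=
    Real.sin_pos_of_pos_of_lt_pi (by linarith) (by linarith)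
  have hkey : (2 * Real.sin (η / 2)) ^ 2 = 2 - 2 * Real.cos η := by nlinarith [hs2]
  -- norms of sum and difference
  have hd2 : ‖u - u'‖ ^ 2 = 2 - 2 * t := by
    rw [norm_sub_sq_real, hu, hu']; ring
  have hsum2 : ‖u + u'‖ ^ 2 = 2 + 2 * t := by
    rw [norm_add_sq_real, hu, hu']; ring
  have hdlb : 2 * Real.sin (η / 2) ≤ ‖u - u'‖ := by
    nlinarith [norm_nonneg (u - u'), habs.2, hsinpos]
  have hslb : 2 * Real.sin (η / 2) ≤ ‖u + u'‖ := by
    nlinarith [norm_nonneg (u + u'), habs.1, hsinpos]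
  have hd_pos : (0 : ℝ) < ‖u - u'‖ := lt_of_lt_of_le (by positivity) hdlb
  have hs_pos : (0 : ℝ) < ‖u + u'‖ := lt_of_lt_of_le (by positivity) hslb
  -- rewrite the hypotheses
  have e1 : |⟪v, ‖u - u'‖⁻¹ • (u - u')⟫| = ‖u - u'‖⁻¹ * |a - b| := by
    rw [real_inner_smul_right, inner_sub_right, abs_mul, abs_of_nonneg (by positivity)]
  have e2 : |⟪v, ‖u + u'‖⁻¹ • (u + u')⟫| = ‖u + u'‖⁻¹ * |a + b| := by
    rw [real_inner_smul_right, inner_add_right, abs_mul, abs_of_nonneg (by positivity)]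
  rw [e1] at h1
  rw [e2] at h2
  have hA' : ‖u - u'‖ * Real.cos (3 * Real.pi / 8) ≤ |a - b| := by
    have h := mul_le_mul_of_nonneg_left h1 hd_pos.le
    rwa [mul_inv_cancel_left₀ hd_pos.ne'] at h
  have hB' : ‖u + u'‖ * Real.cos (3 * Real.pi / 8) ≤ |a + b| := by
    have h := mul_le_mul_of_nonneg_left h2 hs_pos.le
    rwa [mul_inv_cancel_left₀ hs_pos.ne'] at h
  -- numeric bounds
  have hc38 : Real.cos (3 * Real.pi / 8) = Real.sin (Real.pi / 8) := by
    rw [show 3 * Real.pi / 8 = Real.pi / 2 - Real.pi / 8 by ring, Real.cos_pi_div_two_sub]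
  have hs8 := sin_pi_div_eight_gt_038
  have hsin_lb := sin_half_ge η hη hη'
  have h38 : (0.38 : ℝ) < Real.cos (3 * Real.pi / 8) := by rw [hc38]; exact hs8
  have hA : η / 5 ≤ |a - b| := by
    have key : (0.98 * η) * 0.38 ≤ ‖u - u'‖ * Real.cos (3 * Real.pi / 8) :=
      mul_le_mul (by linarith) h38.le (by norm_num) hd_pos.le
    linarith
  have hB : η / 5 ≤ |a + b| := by
    have key : (0.98 * η) * 0.38 ≤ ‖u + u'‖ * Real.cos (3 * Real.pi / 8) :=
      mul_le_mul (by linarith) h38.le (by norm_num) hs_pos.le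
    linarith
  -- conclude
  rcases le_total 0 a with hxa | hxa <;> rcases le_total 0 b with hxb | hxb
  · rw [abs_of_nonneg hxa, abs_of_nonneg hxb]; exact hA
  · rw [abs_of_nonneg hxa, abs_of_nonpos hxb, sub_neg_eq_add]; exact hB
  · rw [abs_of_nonpos hxa, abs_of_nonneg hxb, show -a - b = -(a + b) by ring, abs_neg]
    exact hB
  · rw [abs_of_nonpos hxa, abs_of_nonpos hxb, show -a - -b = -(a - b) by ring, abs_neg]
    exact hA
end

section
/- Let ε ∈ (0, 1/2), let e_1,...,e_n be an orthonormal basis of R^n, and let x ∈ conv{e_1,...,e_n}. If the angle ∠(x, e_i) ≥ ε for every i = 1,...,n, then ‖x‖ ≤ 1 − 4^{1−n}·ε. -/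
open InnerProductGeometry
open scoped RealInnerProductSpace

/-- Parseval identity for an orthonormal family of `n+1` vectors in `ℝ^{n+1}`. -/
theorem parseval_aux {n : ℕ} (e : Fin (n + 1) → EuclideanSpace ℝ (Fin (n + 1)))
    (he : Orthonormal ℝ e) (x : EuclideanSpace ℝ (Fin (n + 1))) :
    ‖x‖ ^ 2 = ∑ i, ⟪e i, x⟫ ^ 2 := by
  have hcard : Fintype.card (Fin (n + 1)) =
      Module.finrank ℝ (EuclideanSpace ℝ (Fin (n + 1))) := by
    simp [finrank_euclideanSpace]
  let b := basisOfLinearIndependentOfCardEqFinrank he.linearIndependent hcard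
  have hb : ⇑b = e := coe_basisOfLinearIndependentOfCardEqFinrank _ _
  let ob := b.toOrthonormalBasis (by rwa [hb])
  have hob : ⇑ob = e := by rw [Module.Basis.coe_toOrthonormalBasis, hb]
  rw [← ob.repr.norm_map x, EuclideanSpace.norm_eq, Real.sq_sqrt (by positivity)]
  refine Finset.sum_congr rfl fun i _ => ?_
  rw [ob.repr_apply_apply, hob, Real.norm_eq_abs, sq_abs]

set_option maxHeartbeats 1000000

/-- Let `ε ∈ (0, 1/2)`, let `e 1, ..., e n` be an orthonormal basis of `ℝ^n`, and let
`x ∈ conv{e 1, ..., e n}`. If `∠(x, e i) ≥ ε` for all `i`, then `‖x‖ ≤ 1 - 4^{1-n} ε`. -/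
theorem norm_le_of_angles_large (n : ℕ) (ε : ℝ) (hε : 0 < ε) (hε' : ε < 1 / 2)
    (e : Fin n → EuclideanSpace ℝ (Fin n)) (he : Orthonormal ℝ e)
    (x : EuclideanSpace ℝ (Fin n)) (hx : x ∈ convexHull ℝ (Set.range e))
    (hangle : ∀ i, ε ≤ InnerProductGeometry.angle x (e i)) :
    ‖x‖ ≤ 1 - (4 : ℝ) ^ ((1 : ℝ) - n) * ε := by
  obtain _ | n := n
  · rw [Set.range_eq_empty e, convexHull_empty] at hx
    exact hx.elim
  set t : Fin (n + 1) → ℝ := fun i => ⟪e i, x⟫ with ht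
  have hite := orthonormal_iff_ite.mp he
  have ht0 : ∀ i, 0 ≤ t i := by
    intro i
    have : x ∈ {y : EuclideanSpace ℝ (Fin (n + 1)) | 0 ≤ ⟪e i, y⟫} := by
      refine convexHull_min ?_
        (convex_halfSpace_ge ⟨fun a b => inner_add_right _ _ _,
          fun c y => real_inner_smul_right _ _ _⟩ 0) hx
      rintro _ ⟨j, rfl⟩
      simp only [Set.mem_setOf_eq, hite]
      split_ifs <;> norm_num
    exact this
  have htsum : ∑ i, t i = 1 := by
    have : x ∈ {y : EuclideanSpace ℝ (Fin (n + 1)) | (∑ i, ⟪e i, y⟫) = 1} := by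
      refine convexHull_min ?_
        (convex_hyperplane ⟨fun a b => by
            simp only [inner_add_right, Finset.sum_add_distrib],
          fun c y => by
            simp only [real_inner_smul_right, smul_eq_mul, ← Finset.mul_sum]⟩ 1) hx
      rintro _ ⟨j, rfl⟩
      simp only [Set.mem_setOf_eq, hite, Finset.sum_ite_eq', Finset.mem_univ, if_true]
    exact this
  have hnorm : ‖x‖ ^ 2 = ∑ i, t i ^ 2 := parseval_aux e he x
  have hti1 : ∀ i, t i ≤ 1 := by
    intro i
    calc t i ≤ ∑ j, t j := Finset.single_le_sum (fun j _ => ht0 j) (Finset.mem_univ i)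
    _ = 1 := htsum
  have hr1 : ‖x‖ ^ 2 ≤ 1 := by
    rw [hnorm]
    calc ∑ i, t i ^ 2 ≤ ∑ i, t i := by
          refine Finset.sum_le_sum fun i _ => ?_
          nlinarith [ht0 i, hti1 i]
    _ = 1 := htsum
  have hrle1 : ‖x‖ ≤ 1 := by nlinarith [norm_nonneg x]
  have hx0 : x ≠ 0 := by
    intro h
    have : (1 : ℝ) = 0 := by
      rw [← htsum]
      simp [ht, h]
    norm_num at this
  have hrpos : 0 < ‖x‖ := norm_pos_iff.mpr hx0
  have hcos : ∀ i, t i ≤ ‖x‖ * Real.cos ε := by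
    intro i
    have h1 : Real.cos (angle x (e i)) ≤ Real.cos ε :=
      Real.cos_le_cos_of_nonneg_of_le_pi hε.le (angle_le_pi x (e i)) (hangle i)
    rw [cos_angle, he.1 i, mul_one] at h1
    have h2 := (div_le_iff₀ hrpos).mp h1
    rw [ht]
    calc ⟪e i, x⟫ = ⟪x, e i⟫ := real_inner_comm _ _
    _ ≤ Real.cos ε * ‖x‖ := h2
    _ = ‖x‖ * Real.cos ε := mul_comm _ _
  have hsq : ε ^ 2 ≤ 1 / 4 := by nlinarith
  have hsin : 15 / 16 * ε ≤ Real.sin ε := by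
    have h := Real.sin_gt_sub_cube hε
    nlinarith [mul_le_mul_of_nonneg_left hsq hε.le]
  have hcosb : 1 - ε / 4 ≤ Real.cos ε := by
    have := Real.one_sub_sq_div_two_le_cos (x := ε)
    nlinarith
  have hcle1 : Real.cos ε ≤ 1 := Real.cos_le_one ε
  have hsc := Real.sin_sq_add_cos_sq ε
  -- the degenerate one-dimensional case is impossible
  obtain rfl | hn := Nat.eq_zero_or_pos n
  · exfalso
    have h0 : t 0 = 1 := by
      rw [← htsum, Fin.sum_univ_one]
    have hr : ‖x‖ ^ 2 = 1 := by
      rw [hnorm, Fin.sum_univ_one, h0]; norm_num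
    have hre : ‖x‖ = 1 := by nlinarith [norm_nonneg x]
    have := hcos 0
    rw [h0, hre, one_mul] at this
    nlinarith [hsin, hε]
  -- now the dimension is at least `2`; reduce the goal to `‖x‖ ≤ 1 - ε / 4`
  have hP : (4 : ℝ) ^ ((1 : ℝ) - ((n + 1 : ℕ) : ℝ)) ≤ 1 / 4 := by
    have h1 : ((1 : ℝ) - ((n + 1 : ℕ) : ℝ)) ≤ -1 := by
      have : (1 : ℝ) ≤ (n : ℝ) := Nat.one_le_cast.mpr hn
      push_cast
      linarith
    calc (4 : ℝ) ^ ((1 : ℝ) - ((n + 1 : ℕ) : ℝ)) ≤ (4 : ℝ) ^ (-1 : ℝ) :=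
          Real.rpow_le_rpow_of_exponent_le (by norm_num) h1
    _ = 1 / 4 := by
        rw [Real.rpow_neg_one]; norm_num
  suffices hmain : ‖x‖ ≤ 1 - ε / 4 by
    have h2 : (4 : ℝ) ^ ((1 : ℝ) - ((n + 1 : ℕ) : ℝ)) * ε ≤ 1 / 4 * ε :=
      mul_le_mul_of_nonneg_right hP hε.le
    calc ‖x‖ ≤ 1 - ε / 4 := hmain
    _ ≤ 1 - (4 : ℝ) ^ ((1 : ℝ) - ((n + 1 : ℕ) : ℝ)) * ε := by linarith
  -- pick a coordinate of maximal weight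
  obtain ⟨a, -, ha⟩ := Finset.exists_max_image Finset.univ t ⟨0, Finset.mem_univ 0⟩
  by_cases hM : t a ≤ 1 / 2
  · -- all weights are small, so the norm is at most `3/4`
    have key : ‖x‖ ^ 2 ≤ 1 / 2 := by
      rw [hnorm]
      calc ∑ i, t i ^ 2 ≤ ∑ i, t i * (1 / 2) := by
            refine Finset.sum_le_sum fun i _ => ?_
            nlinarith [ht0 i, ha i (Finset.mem_univ i)]
      _ = 1 / 2 := by rw [← Finset.sum_mul, htsum]; norm_num
    nlinarith [norm_nonneg x]
  · -- one dominant weight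
    push_neg at hM
    have hSa : ∑ i ∈ Finset.univ.erase a, t i = 1 - t a := by
      rw [Finset.sum_erase_eq_sub (Finset.mem_univ a), htsum]
    have key : ‖x‖ ^ 2 ≤ t a ^ 2 + (1 - t a) ^ 2 := by
      rw [hnorm, ← Finset.add_sum_erase _ _ (Finset.mem_univ a)]
      have h2 : ∑ i ∈ Finset.univ.erase a, t i ^ 2 ≤ (1 - t a) ^ 2 := by
        calc ∑ i ∈ Finset.univ.erase a, t i ^ 2
            ≤ ∑ i ∈ Finset.univ.erase a, t i * (1 - t a) := by
              refine Finset.sum_le_sum fun i hi => ?_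
              have hle : t i ≤ 1 - t a := by
                rw [← hSa]
                exact Finset.single_le_sum (fun j _ => ht0 j) hi
              nlinarith [ht0 i]
          _ = (1 - t a) ^ 2 := by rw [← Finset.sum_mul, hSa]; ring
      linarith
    have hta : t a ≤ ‖x‖ * Real.cos ε := hcos a
    have hrc1 : ‖x‖ * Real.cos ε ≤ 1 := by
      nlinarith [hrpos.le]
    -- monotonicity of `u ↦ u² + (1-u)²` on `[1/2, ∞)`
    have key2 : ‖x‖ ^ 2 ≤ (‖x‖ * Real.cos ε) ^ 2 + (1 - ‖x‖ * Real.cos ε) ^ 2 := by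
      nlinarith [hta, hM, key]
    have key3 : (‖x‖ * Real.sin ε) ^ 2 ≤ (1 - ‖x‖ * Real.cos ε) ^ 2 := by
      nlinarith [key2]
    have key4 : ‖x‖ * Real.sin ε ≤ 1 - ‖x‖ * Real.cos ε := by
      have h01 : 0 ≤ ‖x‖ * Real.sin ε := by
        have : 0 ≤ Real.sin ε := by nlinarith
        positivity
      nlinarith [key3, h01, hrc1]
    -- hence `‖x‖ (sin ε + cos ε) ≤ 1`, and `sin ε + cos ε ≥ 1 + (11/16) ε`
    nlinarith [key4, hsin, hcosb, hrpos.le, hε.le, mul_le_mul_of_nonneg_left hsin hrpos.le,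
      mul_le_mul_of_nonneg_left hcosb hrpos.le]
end
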